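/- Let B ⊂ ℝ^d be bounded, x ∈ B with i(x) ≠ 0, and let R, L, H be positive constants with R' := max{R, 10L}. Suppose î and ĭ each satisfy: î(x,x,0) = i(x), |î(u,v,h) − î(w,v,h)| ≤ L|u−w|, |î(u,v,h) − î(u,w,h)| ≤ L|v−w|, and |î(x,x,h) − î(x,x,0)| ≤ Lh|i(x)| for all u,v,w ∈ B_R(x) and h ∈ [0,H). Then for every z ∈ B_{R'}(x) and every h ∈ [0, min{H, 1/(10L)}), the inner product satisfies î(x,z,h) · ĭ(x,z,h) > (1/2)|i(x)|². -/

import Mathlib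

open scoped RealInnerProductSpace

noncomputable section

/-- Membership in the ball `B_R(x) = {z : ‖z − x‖ ≤ ‖i x‖ / R}`. -/
def InBall {d : ℕ} (i : EuclideanSpace ℝ (Fin d) → EuclideanSpace ℝ (Fin d)) (R : ℝ)
    (x z : EuclideanSpace ℝ (Fin d)) : Prop :=
  ‖z - x‖ ≤ ‖i x‖ / R

/-- The consistency and local Lipschitz conditions at the point `x` for an approximation
`g(·,·,·)` of `target` (conditions (11z)/(12z) of the paper, with balls measured via `i`). -/
def ConsistAt {d : ℕ} (i target : EuclideanSpace ℝ (Fin d) → EuclideanSpace ℝ (Fin d))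
    (x : EuclideanSpace ℝ (Fin d)) (R L H : ℝ)
    (g : EuclideanSpace ℝ (Fin d) → EuclideanSpace ℝ (Fin d) → ℝ → EuclideanSpace ℝ (Fin d)) :
    Prop :=
  g x x 0 = target x ∧
    ∀ h : ℝ, 0 ≤ h → h < H →
      (∀ u v w, InBall i R x u → InBall i R x v → InBall i R x w →
        ‖g u v h - g w v h‖ ≤ L * ‖u - w‖ ∧ ‖g u v h - g u w h‖ ≤ L * ‖v - w‖) ∧
      ‖g x x h - g x x 0‖ ≤ L * h * ‖i x‖

/-- The discrete gradient step equation `x' = x + h S̃(x,x',h) ī(x,x')`, where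
`S̃ = (f̃ ĩᵀ − ĩ f̃ᵀ)/(î·ĭ)`, so that
`S̃ ī = ((ĩ·ī) f̃ − (f̃·ī) ĩ)/(î·ĭ)`. -/
def DGEq {d : ℕ}
    (ftil itil ihat ibrev :
      EuclideanSpace ℝ (Fin d) → EuclideanSpace ℝ (Fin d) → ℝ → EuclideanSpace ℝ (Fin d))
    (ibar : EuclideanSpace ℝ (Fin d) → EuclideanSpace ℝ (Fin d) → EuclideanSpace ℝ (Fin d))
    (x : EuclideanSpace ℝ (Fin d)) (h : ℝ) (x' : EuclideanSpace ℝ (Fin d)) : Prop :=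
  x' = x + (h / ⟪ihat x x' h, ibrev x x' h⟫) •
    (⟪itil x x' h, ibar x x'⟫ • ftil x x' h - ⟪ftil x x' h, ibar x x'⟫ • itil x x' h)

/-- The denominator bound `î(x,z,h)·ĭ(x,z,h) > (1/2)|i(x)|²`. -/
theorem discrete_gradient_denominator_lower_bound {d : ℕ}
    (I : EuclideanSpace ℝ (Fin d) → ℝ)
    (i : EuclideanSpace ℝ (Fin d) → EuclideanSpace ℝ (Fin d))
    (hgrad : ∀ x, HasGradientAt I (i x) x)
    (B : Set (EuclideanSpace ℝ (Fin d))) (hB : Bornology.IsBounded B)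
    (x : EuclideanSpace ℝ (Fin d)) (hxB : x ∈ B) (hix : i x ≠ 0)
    (R L H : ℝ) (hR : 0 < R) (hL : 0 < L) (hH : 0 < H)
    (R' : ℝ) (hR' : R' = max R (10 * L))
    (ihat ibrev :
      EuclideanSpace ℝ (Fin d) → EuclideanSpace ℝ (Fin d) → ℝ → EuclideanSpace ℝ (Fin d))
    (hihat : ConsistAt i i x R L H ihat)
    (hibrev : ConsistAt i i x R L H ibrev) :
    ∀ z : EuclideanSpace ℝ (Fin d), InBall i R' x z →
      ∀ h : ℝ, 0 ≤ h → h < min H (1 / (10 * L)) →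
        (1/2) * ‖i x‖ ^ 2 < ⟪ihat x z h, ibrev x z h⟫ := by
  intro z hz h hh0 hhlt
  have hix0 : (0:ℝ) < ‖i x‖ := norm_pos_iff.mpr hix
  have hR'10L : 10 * L ≤ R' := by rw [hR']; exact le_max_right _ _
  have hRR' : R ≤ R' := by rw [hR']; exact le_max_left _ _
  have hR'pos : 0 < R' := lt_of_lt_of_le (by positivity) hR'10L
  have hzR : InBall i R x z := by
    refine le_trans hz (by gcongr)
  have hhH : h < H := lt_of_lt_of_le hhlt (min_le_left _ _)
  have hh10L : h < 1 / (10 * L) := lt_of_lt_of_le hhlt (min_le_right _ _)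
  have bound : ∀ g : EuclideanSpace ℝ (Fin d) → EuclideanSpace ℝ (Fin d) → ℝ →
      EuclideanSpace ℝ (Fin d), ConsistAt i i x R L H g →
      ‖g x z h - i x‖ < 1/5 * ‖i x‖ := by
    rintro g ⟨hg0, hgc⟩
    obtain ⟨hlip, hcons⟩ := hgc h hh0 hhH
    have hxx : InBall i R x x := by
      simp only [InBall, sub_self, norm_zero]
      positivity
    have h1 : ‖g x z h - g x x h‖ ≤ L * ‖z - x‖ := (hlip x z x hxx hzR hxx).2
    have h2 : ‖g x x h - i x‖ ≤ L * h * ‖i x‖ := by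
      have := hcons; rwa [hg0] at this
    have htri : ‖g x z h - i x‖ ≤ ‖g x z h - g x x h‖ + ‖g x x h - i x‖ := by
      have := norm_sub_le_norm_sub_add_norm_sub (g x z h) (g x x h) (i x)
      exact this
    have hzx : ‖z - x‖ ≤ ‖i x‖ / (10 * L) := by
      exact le_trans hz (by gcongr)
    have e1 : L * ‖z - x‖ ≤ ‖i x‖ / 10 := by
      calc L * ‖z - x‖ ≤ L * (‖i x‖ / (10 * L)) := by gcongr
        _ = ‖i x‖ / 10 := by field_simp
    have e2 : L * h * ‖i x‖ < ‖i x‖ / 10 := by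
      have : L * h < 1/10 := by
        have := (lt_div_iff₀ (by positivity : (0:ℝ) < 10 * L)).mp hh10L
        nlinarith
      nlinarith
    calc ‖g x z h - i x‖ ≤ L * ‖z - x‖ + L * h * ‖i x‖ := le_trans htri (by linarith)
      _ < ‖i x‖ / 10 + ‖i x‖ / 10 := by linarith
      _ = 1/5 * ‖i x‖ := by ring
  have ha := bound ihat hihat
  have hb := bound ibrev hibrev
  set a := ihat x z h - i x with hadef
  set b := ibrev x z h - i x with hbdef
  have hha : ihat x z h = i x + a := by rw [hadef]; abel
  have hhb : ibrev x z h = i x + b := by rw [hbdef]; abel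
  rw [hha, hhb]
  have expand : ⟪i x + a, i x + b⟫ = ‖i x‖^2 + ⟪i x, b⟫ + ⟪a, i x⟫ + ⟪a, b⟫ := by
    rw [inner_add_left, inner_add_right, inner_add_right, real_inner_self_eq_norm_sq]
    ring
  rw [expand]
  have c1 : |⟪i x, b⟫| ≤ ‖i x‖ * ‖b‖ := abs_real_inner_le_norm _ _
  have c2 : |⟪a, i x⟫| ≤ ‖a‖ * ‖i x‖ := abs_real_inner_le_norm _ _
  have c3 : |⟪a, b⟫| ≤ ‖a‖ * ‖b‖ := abs_real_inner_le_norm _ _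
  have na : (0:ℝ) ≤ ‖a‖ := norm_nonneg _
  have nb : (0:ℝ) ≤ ‖b‖ := norm_nonneg _
  have d1 := abs_le.mp c1
  have d2 := abs_le.mp c2
  have d3 := abs_le.mp c3
  nlinarith [d1.1, d2.1, d3.1, mul_pos hix0 hix0]
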